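/- Let b ≥ 2, ℓ ≥ 1, m = b^{ℓ+1}, G the good-slice set, and define S(a) = -1 - ⌊a/b⌋ + Σ_{n ∈ G}(⌊(n+1)a/m⌋ - ⌊n·a/m⌋) for 1 ≤ a < m with gcd(a, m) = 1. Then for any p > m with gcd(p,b)=1 and p ≡ a (mod m), C(b^ℓ mod p) - ⌊(p-1)/b⌋ = S(a). -/

import Mathlib

-- ceiling division characterization
lemma aux_ceil_le_iff {m : ℕ} (hm : 0 < m) (x r : ℕ) :
    (x + m - 1) / m ≤ r ↔ x ≤ m * r := by
  constructor
  · intro h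
    have h1 := Nat.div_add_mod (x + m - 1) m
    have h2 := Nat.mod_lt (x + m - 1) hm
    have h3 : x ≤ m * ((x + m - 1) / m) := by omega
    exact h3.trans (Nat.mul_le_mul_left m h)
  · intro h
    have h2 : (x + m - 1) / m ≤ (m * r + (m-1)) / m :=
      Nat.div_le_div_right (by omega)
    rwa [Nat.mul_add_div hm, Nat.div_eq_of_lt (show m - 1 < m by omega),
      Nat.add_zero] at h2

-- the filter condition equivalence
lemma aux_cond (b L p r : ℕ) (hb : 0 < b) (hL : 0 < L) (hLp : L < p) :
    b * r / p = b * (L % p * r % p) / p ↔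
      (b * L * r / p) / L = (b * L * r / p) % b := by
  have hp : 0 < p := lt_of_le_of_lt (Nat.zero_le _) hLp
  rw [Nat.mod_eq_of_lt hLp]
  have h1 : b * L * r / p / L = b * r / p := by
    rw [Nat.div_div_eq_div_mul, show b * L * r = b * r * L by ring,
      ← Nat.mul_div_mul_right (b*r) p hL]
  have h2 : b * L * r / p / b = L * r / p := by
    rw [Nat.div_div_eq_div_mul, show b * L * r = L * r * b by ring,
      ← Nat.mul_div_mul_right (L*r) p hb]
  have hs := Nat.div_add_mod (L * r) p
  have h3 : p * (b * (L * r / p)) + b * (L * r % p) = b * L * r := by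
    calc p * (b * (L * r / p)) + b * (L * r % p)
        = b * (p * (L * r / p) + L * r % p) := by ring
      _ = b * (L * r) := by rw [hs]
      _ = b * L * r := by ring
  have h4 : b * (L * r % p) / p = b * L * r / p - b * (L * r / p) := by
    rw [← h3, Nat.mul_add_div hp, Nat.add_sub_cancel_left]
  have h5 := Nat.div_add_mod (b * L * r / p) b
  rw [h2] at h5
  have h6 : b * L * r / p % b = b * L * r / p - b * (L * r / p) :=
    eq_tsub_of_add_eq (by omega)
  rw [h1, h4, h6]

-- fiber as interval
lemma aux_fiber (m p n : ℕ) (hm : 0 < m) (hmp : m < p) (hn : n < m) :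
    (Finset.Icc 1 (p-1)).filter (fun r => m * r / p = n) =
      Finset.Ico (max 1 ((n * p + m - 1) / m)) (((n+1) * p + m - 1) / m) := by
  have hp : 0 < p := lt_trans hm hmp
  ext r
  simp only [Finset.mem_filter, Finset.mem_Icc, Finset.mem_Ico, max_le_iff]
  constructor
  · rintro ⟨⟨h1, h2⟩, h3⟩
    have hub : m * r < (n+1) * p :=
      (Nat.div_lt_iff_lt_mul hp).mp (show m * r / p < n + 1 by omega)
    refine ⟨⟨h1, (aux_ceil_le_iff hm _ _).mpr ?_⟩, ?_⟩
    · have h4 := Nat.div_mul_le_self (m * r) p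
      rw [h3] at h4; exact h4
    · by_contra hc
      push_neg at hc
      have := (aux_ceil_le_iff hm _ _).mp hc
      omega
  · rintro ⟨⟨h1, h2⟩, h3⟩
    have hlb : n * p ≤ m * r := (aux_ceil_le_iff hm _ _).mp h2
    have hub : m * r < (n+1) * p := by
      by_contra hc
      push_neg at hc
      exact absurd ((aux_ceil_le_iff hm _ _).mpr hc) (by omega)
    have e1 : n ≤ m * r / p := (Nat.le_div_iff_mul_le hp).mpr hlb
    have e2 : m * r / p < n + 1 := (Nat.div_lt_iff_lt_mul hp).mpr hub
    have hrp : r < p := by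
      have hq : m * r < m * p := lt_of_lt_of_le hub (Nat.mul_le_mul_right p hn)
      exact lt_of_mul_lt_mul_left hq (Nat.zero_le m)
    exact ⟨⟨h1, by omega⟩, by omega⟩

-- value of the ceiling at k with m ∤ k*a
lemma aux_cval (m p a k : ℕ) (hm : 0 < m) (hpa : p % m = a) (hnd : ¬ m ∣ k * a) :
    (k * p + m - 1) / m = (p / m) * k + k * a / m + 1 := by
  have hQ := Nat.div_add_mod p m
  rw [hpa] at hQ
  have hT := Nat.div_add_mod (k * a) m
  have hU : 1 ≤ k * a % m := by
    rcases Nat.eq_zero_or_pos (k * a % m) with h | h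
    · exact absurd (Nat.dvd_of_mod_eq_zero h) hnd
    · exact h
  have hU2 : k * a % m < m := Nat.mod_lt _ hm
  have hkp : k * p = m * ((p / m) * k + k * a / m) + k * a % m := by
    calc k * p = k * (m * (p / m) + a) := by rw [hQ]
      _ = m * ((p / m) * k) + (m * (k * a / m) + k * a % m) := by rw [hT]; ring
      _ = _ := by ring
  rw [show k * p + m - 1 = m * ((p / m) * k + k * a / m) + (k * a % m + m - 1) by omega,
    Nat.mul_add_div hm]
  have h9 : (k * a % m + m - 1) / m = 1 :=
    Nat.div_eq_of_lt_le (by omega) (by omega)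
  omega

-- cardinality of the good set
lemma aux_cardG (b ℓ : ℕ) (hb : 2 ≤ b) (hℓ : 1 ≤ ℓ) :
    ((Finset.range (b ^ (ℓ+1))).filter (fun n => n / b ^ ℓ = n % b)).card = b ^ ℓ := by
  have hb0 : 0 < b := by omega
  have hL : 0 < b ^ ℓ := pow_pos hb0 ℓ
  have hdvd : b ∣ b ^ ℓ := dvd_pow_self b (by omega)
  have key : ((Finset.range (b ^ (ℓ+1))).filter (fun n => n / b ^ ℓ = n % b)).card
      = (Finset.range (b ^ ℓ)).card := by
    apply Finset.card_bij' (fun n _ => n % b ^ ℓ) (fun i _ => (i % b) * b ^ ℓ + i)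
    · intro n hn
      exact Finset.mem_range.mpr (Nat.mod_lt _ hL)
    · intro i hi
      rw [Finset.mem_range] at hi
      rw [Finset.mem_filter, Finset.mem_range]
      have hib : i % b < b := Nat.mod_lt _ hb0
      constructor
      · calc (i % b) * b ^ ℓ + i < (i % b) * b ^ ℓ + b ^ ℓ := by omega
          _ = (i % b + 1) * b ^ ℓ := by ring
          _ ≤ b * b ^ ℓ := Nat.mul_le_mul_right _ (by omega)
          _ = b ^ (ℓ+1) := by rw [pow_succ]; ring
      · have hd : ((i % b) * b ^ ℓ + i) / b ^ ℓ = i % b := by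
          rw [show (i % b) * b ^ ℓ + i = b ^ ℓ * (i % b) + i by ring,
            Nat.mul_add_div hL, Nat.div_eq_of_lt hi, Nat.add_zero]
        have hm : ((i % b) * b ^ ℓ + i) % b = i % b := by
          obtain ⟨c, hc⟩ := hdvd
          rw [hc, show i % b * (b * c) + i = b * (i % b * c) + i by ring,
            Nat.mul_add_mod]
        rw [hd, hm]
    · intro n hn
      rw [Finset.mem_filter, Finset.mem_range] at hn
      have h1 : n % b ^ ℓ % b = n % b := Nat.mod_mod_of_dvd n hdvd
      rw [h1, ← hn.2, Nat.div_add_mod']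
    · intro i hi
      rw [Finset.mem_range] at hi
      rw [Nat.mul_add_mod', Nat.mod_eq_of_lt hi]
  rw [key, Finset.card_range]

theorem deviation_formula (b ℓ p a : ℕ) (hb : 2 ≤ b) (hℓ : 1 ≤ ℓ)
    (hp : b ^ (ℓ + 1) < p) (hcop : Nat.gcd p b = 1)
    (ha : 1 ≤ a) (ham : a < b ^ (ℓ + 1)) (hacop : Nat.gcd a (b ^ (ℓ + 1)) = 1)
    (hcong : p % b ^ (ℓ + 1) = a) :
    ((((Finset.Icc 1 (p - 1)).filter
        (fun r => b * r / p = b * (b ^ ℓ % p * r % p) / p)).card : ℤ)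
      - ((p - 1) / b : ℕ)) =
    -1 - (a / b : ℕ)
      + ∑ n ∈ (Finset.range (b ^ (ℓ + 1))).filter (fun n => n / b ^ ℓ = n % b),
        (((n + 1) * a / b ^ (ℓ + 1) : ℕ) - (n * a / b ^ (ℓ + 1) : ℕ) : ℤ) := by
  set m := b ^ (ℓ + 1) with hmdef
  set L := b ^ ℓ with hLdef
  have hb0 : 0 < b := by omega
  have hL0 : 0 < L := by rw [hLdef]; exact pow_pos hb0 ℓ
  have hmL : m = b * L := by rw [hmdef, hLdef, pow_succ]; ring
  have hm0 : 0 < m := by rw [hmdef]; exact pow_pos hb0 _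
  have hm2 : 2 * L ≤ m := by rw [hmL]; exact Nat.mul_le_mul_right L hb
  have hLm : L < m := by omega
  have hmp : m < p := hp
  have hp0 : 0 < p := by omega
  have hLp : L < p := by omega
  set Q := p / m with hQdef
  have hQm : m * Q + a = p := by rw [hQdef, ← hcong]; exact Nat.div_add_mod p m
  have hQZ : (m : ℤ) * Q + a = p := by exact_mod_cast hQm
  have hco : Nat.Coprime a m := hacop
  have hndvd : ∀ k, 1 ≤ k → k < m → ¬ m ∣ k * a := by
    intro k hk1 hk2 hdv
    have hk : m ∣ k := Nat.Coprime.dvd_of_dvd_mul_right (Nat.Coprime.symm hco) hdv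
    exact absurd (Nat.le_of_dvd (by omega) hk) (by omega)
  set G := (Finset.range m).filter (fun n => n / L = n % b) with hGdef
  -- Step 1: rewrite the condition
  have hstep1 : (Finset.Icc 1 (p-1)).filter (fun r => b * r / p = b * (L % p * r % p) / p)
      = (Finset.Icc 1 (p-1)).filter (fun r => (m * r / p) / L = (m * r / p) % b) := by
    apply Finset.filter_congr
    intro r _
    rw [hmL]
    exact aux_cond b L p r hb0 hL0 hLp
  -- Step 2: fiberwise count
  have hstep2 : ((Finset.Icc 1 (p-1)).filter (fun r => (m * r / p) / L = (m * r / p) % b)).card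
      = ∑ n ∈ G, ((Finset.Icc 1 (p-1)).filter (fun r => m * r / p = n)).card := by
    rw [Finset.card_eq_sum_card_fiberwise (f := fun r => m * r / p) (t := G) ?_]
    · apply Finset.sum_congr rfl
      intro n hn
      rw [Finset.filter_filter]
      refine congrArg Finset.card ?_
      apply Finset.filter_congr
      intro r _
      rw [hGdef, Finset.mem_filter] at hn
      constructor
      · rintro ⟨_, h⟩; exact h
      · intro h; exact ⟨by rw [h]; exact hn.2, h⟩
    · intro r hr
      rw [Finset.mem_coe, Finset.mem_filter, Finset.mem_Icc] at hr
      rw [Finset.mem_coe, hGdef, Finset.mem_filter, Finset.mem_range]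
      refine ⟨?_, hr.2⟩
      have hrp : r < p := by omega
      exact (Nat.div_lt_iff_lt_mul hp0).mpr ((Nat.mul_lt_mul_left hm0).mpr hrp)
  -- Step 3: termwise value
  have hterm : ∀ n ∈ G, (((Finset.Icc 1 (p-1)).filter (fun r => m * r / p = n)).card : ℤ)
      = (Q : ℤ) + ((n+1) * a / m : ℕ) - (n * a / m : ℕ)
        - (if n = m - 1 then 1 else 0) := by
    intro n hn
    rw [hGdef, Finset.mem_filter, Finset.mem_range] at hn
    obtain ⟨hnm, -⟩ := hn
    rw [aux_fiber m p n hm0 hmp hnm, Nat.card_Ico]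
    by_cases h0 : n = 0
    · subst h0
      have hc0 : (0 * p + m - 1) / m = 0 := Nat.div_eq_of_lt (by omega)
      have hc1 : ((0+1) * p + m - 1) / m = Q + 1 := by
        rw [Nat.zero_add, aux_cval m p a 1 hm0 hcong (hndvd 1 (by omega) (by omega)),
          ← hQdef, Nat.mul_one, Nat.one_mul, Nat.div_eq_of_lt ham]
      rw [hc0, hc1, if_neg (show (0:ℕ) ≠ m - 1 by omega),
        Nat.zero_add, Nat.one_mul, Nat.div_eq_of_lt ham, Nat.zero_mul, Nat.zero_div,
        Nat.max_zero, Nat.add_sub_cancel]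
      simp
    · have hx := aux_cval m p a n hm0 hcong (hndvd n (by omega) (by omega))
      rw [← hQdef] at hx
      have hmax : max 1 ((n * p + m - 1) / m) = (n * p + m - 1) / m :=
        max_eq_right (by rw [hx]; exact Nat.le_add_left 1 _)
      by_cases h1 : n = m - 1
      · subst h1
        have hm1 : m - 1 + 1 = m := by omega
        have hcm : (m * p + m - 1) / m = p := by
          rw [show m * p + m - 1 = m * p + (m-1) by omega, Nat.mul_add_div hm0,
            Nat.div_eq_of_lt (by omega), Nat.add_zero]
        have hma : m * a / m = a := Nat.mul_div_cancel_left a hm0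
        have hle : Q * (m-1) + (m-1) * a / m + 1 ≤ p := by
          have h9 : ((m-1) * p + m - 1) / m ≤ (m * p + m - 1) / m :=
            Nat.div_le_div_right
              (by have := Nat.mul_le_mul_right p (show m - 1 ≤ m by omega); omega)
          rw [hx, hcm] at h9
          exact h9
        rw [hm1, hmax, hcm, hx, Nat.cast_sub hle, if_pos rfl, hma]
        have hm1z : ((m-1 : ℕ) : ℤ) = (m : ℤ) - 1 := by omega
        simp only [Nat.cast_add, Nat.cast_mul, Nat.cast_one]
        rw [hm1z]
        linear_combination -hQZ
      · have hy := aux_cval m p a (n+1) hm0 hcong (hndvd (n+1) (by omega) (by omega))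
        rw [← hQdef] at hy
        have hmono : (n * p + m - 1) / m ≤ ((n+1) * p + m - 1) / m :=
          Nat.div_le_div_right
            (by have := Nat.mul_le_mul_right p (show n ≤ n + 1 by omega); omega)
        rw [hmax, Nat.cast_sub (by rw [hx] at hmono ⊢; exact hmono), hx, hy, if_neg h1]
        simp only [Nat.cast_add, Nat.cast_mul, Nat.cast_one]
        ring
  -- membership of m-1 in G
  have hmem : m - 1 ∈ G := by
    rw [hGdef, Finset.mem_filter, Finset.mem_range]
    refine ⟨by omega, ?_⟩
    have e1 : (m - 1) / L = b - 1 := by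
      apply Nat.div_eq_of_lt_le
      · have h2 : (b - 1) * L + L = b * L := by
          have hb1 : b - 1 + 1 = b := by omega
          calc (b-1) * L + L = (b - 1 + 1) * L := by ring
            _ = b * L := by rw [hb1]
        omega
      · have hb1 : b - 1 + 1 = b := by omega
        rw [hb1]
        omega
    have e2 : (m - 1) % b = b - 1 := by
      have hmL' : m = L * b := by rw [hmL]; ring
      have h2 : (L - 1) * b + b = L * b := by
        have hL1 : L - 1 + 1 = L := by omega
        calc (L-1) * b + b = (L - 1 + 1) * b := by ring
          _ = L * b := by rw [hL1]
      have h3 : m - 1 = (L - 1) * b + (b - 1) := by omega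
      rw [h3, Nat.mul_add_mod', Nat.mod_eq_of_lt (by omega)]
    rw [e1, e2]
  -- assemble
  rw [hstep1, hstep2, Nat.cast_sum, Finset.sum_congr rfl hterm]
  have hsplit : ∑ n ∈ G, ((Q : ℤ) + ((n+1) * a / m : ℕ) - (n * a / m : ℕ)
        - (if n = m - 1 then 1 else 0))
      = (L : ℤ) * Q + (∑ n ∈ G, ((((n+1) * a / m : ℕ) : ℤ) - ((n * a / m : ℕ) : ℤ))) - 1 := by
    have hre : ∀ n ∈ G, ((Q : ℤ) + ((n+1) * a / m : ℕ) - (n * a / m : ℕ)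
        - (if n = m - 1 then 1 else 0))
        = ((Q : ℤ) + ((((n+1) * a / m : ℕ) : ℤ) - ((n * a / m : ℕ) : ℤ)))
          - (if n = m - 1 then (1:ℤ) else 0) := by
      intro n _; ring
    rw [Finset.sum_congr rfl hre, Finset.sum_sub_distrib, Finset.sum_add_distrib,
      Finset.sum_const, Finset.sum_ite_eq' G (m-1) (fun _ => (1:ℤ)), if_pos hmem,
      nsmul_eq_mul]
    have hcg : (G.card : ℤ) = (L : ℤ) := by
      rw [hGdef, hLdef, hmdef]
      exact_mod_cast aux_cardG b ℓ hb hℓ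
    rw [hcg]
  rw [hsplit]
  -- final arithmetic
  have hab : ¬ b ∣ a := by
    intro hd
    have hcab : Nat.Coprime a b := by
      have := (Nat.coprime_pow_right_iff (show 0 < ℓ + 1 by omega) a b).mp
      rw [← hmdef] at this
      exact this hco
    have := Nat.Coprime.eq_one_of_dvd hcab.symm hd
    omega
  have hamod : a % b ≠ 0 := fun h => hab (Nat.dvd_of_mod_eq_zero h)
  have hpb : (p - 1) / b = L * Q + a / b := by
    have h3 : b * (L * Q) = m * Q := by rw [hmL]; ring
    have h2 : p - 1 = b * (L * Q) + (a - 1) := by omega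
    have h5 := Nat.div_add_mod a b
    have h6 : a % b < b := Nat.mod_lt _ hb0
    have h7 : a - 1 = b * (a / b) + (a % b - 1) := by omega
    rw [h2, Nat.mul_add_div hb0, h7, Nat.mul_add_div hb0,
      show (a % b - 1) / b = 0 from Nat.div_eq_of_lt (by omega), Nat.add_zero]
  rw [hpb, Nat.cast_add, Nat.cast_mul]
  ring
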